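/- Let n ≥ 1 and let r be a natural number with 1 ≤ r ≤ 2n − 1. Then for every natural number l ≥ 0 one has C(l+2n, l+1) ≥ r·C(l+2n−r−1, l). -/
import Mathlib


/-- For the symplectomorphism pseudogroup of a `2n`-dimensional symplectic manifold acting on
codimension-`r` submanifolds (`1 ≤ r ≤ 2n - 1`), the transversality dimension inequality
`dim g^l ≥ dim h^l` holds for all `l`. -/
theorem symplectic_pseudogroup_dim_trans (n r : ℕ) (hn : 1 ≤ n) (hr1 : 1 ≤ r)
    (hr2 : r ≤ 2 * n - 1) :
    ∀ l : ℕ, Nat.choose (l + 2 * n) (l + 1) ≥ r * Nat.choose (l + 2 * n - r - 1) l := by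
  intro l
  obtain ⟨d, hd⟩ : ∃ d, 2 * n = r + 1 + d := ⟨2 * n - r - 1, by omega⟩
  have key : l + 2 * n - r - 1 = l + d := by omega
  rw [key]
  calc r * Nat.choose (l + d) l
      = ∑ k ∈ Finset.Icc (l + d) (l + d + r - 1), Nat.choose (l + d) l := by
        rw [Finset.sum_const, smul_eq_mul, Nat.card_Icc]
        congr 1
        omega
    _ ≤ ∑ k ∈ Finset.Icc (l + d) (l + d + r - 1), Nat.choose k l := by
        apply Finset.sum_le_sum
        intro k hk
        exact Nat.choose_le_choose l (Finset.mem_Icc.mp hk).1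
    _ ≤ ∑ k ∈ Finset.Icc l (l + d + r - 1), Nat.choose k l := by
        apply Finset.sum_le_sum_of_subset
        apply Finset.Icc_subset_Icc_left
        omega
    _ = Nat.choose (l + d + r - 1 + 1) (l + 1) := Nat.sum_Icc_choose _ _
    _ ≤ Nat.choose (l + 2 * n) (l + 1) := Nat.choose_le_choose _ (by omega)
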